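/- arXiv:cs/0306017 — 2 statements merged into one kernel-verified Lean document; each statement's English description precedes it below -/
import Mathlib

section
/- If {T_P^n(I)}_{n<ω} is an α-chain, then T_{P,α}^ω(I) is the least upper bound of the chain with respect to ⊑_α: T_P^n(I) ⊑_α T_{P,α}^ω(I) for all n < ω, and for any interpretation J with T_P^n(I) ⊑_α J for all n < ω, we have T_{P,α}^ω(I) ⊑_α J. -/
open Ordinal Set

noncomputable section
attribute [local instance] Classical.propDecidable

namespace IVS

/-- Countable ordinals: ordinals below `ω₁`. -/
abbrev Ord1 := {o : Ordinal.{0} // o < ω₁}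

theorem zero_lt_omega1 : (0 : Ordinal) < ω₁ := omega_pos 1

theorem succ_lt_omega1 {o : Ordinal} (h : o < ω₁) : o + 1 < ω₁ := by
  have := (Cardinal.isSuccLimit_omega 1).succ_lt h
  rwa [Order.succ_eq_add_one] at this

/-- zero as a countable ordinal -/
def O0 : Ord1 := ⟨0, zero_lt_omega1⟩

/-- successor on countable ordinals -/
def Ord1.succ (a : Ord1) : Ord1 := ⟨a.1 + 1, succ_lt_omega1 a.2⟩

/-- The truth domain `V`: `F_α < ⋯ < 0 < ⋯ < T_α` realized as a lexicographic sum. -/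
abbrev TV := Ord1 ⊕ₗ (Unit ⊕ₗ Ord1ᵒᵈ)

/-- the false value `F_α` -/
def TV.F (a : Ord1) : TV := toLex (Sum.inl a)
/-- the middle value `0` -/
def TV.Z : TV := toLex (Sum.inr (toLex (Sum.inl ())))
/-- the true value `T_α` -/
def TV.T (a : Ord1) : TV := toLex (Sum.inr (toLex (Sum.inr (OrderDual.toDual a))))

/-- the order of a truth value (`⊤` codes `+∞`, the order of `0`) -/
def ordOf (v : TV) : WithTop Ordinal :=
  match ofLex v with
  | .inl a => (a.1 : Ordinal)
  | .inr b =>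
    match ofLex b with
    | .inl _ => ⊤
    | .inr a => ((OrderDual.ofDual a).1 : Ordinal)

/-- negation-as-failure: `¬F_α = T_{α+1}`, `¬T_α = F_{α+1}`, `¬0 = 0`. -/
def negv (v : TV) : TV :=
  match ofLex v with
  | .inl a => TV.T a.succ
  | .inr b =>
    match ofLex b with
    | .inl _ => TV.Z
    | .inr a => TV.F (OrderDual.ofDual a).succ

/-- Literals of a propositional normal program (atoms are natural numbers). -/
inductive Lit where
  | pos (n : ℕ)
  | neg (n : ℕ)
  | tt
  | ff

/-- A normal program clause: a head atom and a body which is a conjunction of literals. -/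
structure Clause where
  head : ℕ
  body : List Lit

/-- A (possibly infinite) propositional normal logic program. -/
abbrev Program := Set Clause

/-- Infinite-valued interpretations. -/
abbrev Interp := ℕ → TV

/-- the interpretation assigning `F₀` to every atom (denoted `∅` in the paper) -/
def botI : Interp := fun _ => TV.F O0

def evalLit (I : Interp) : Lit → TV
  | .pos n => I n
  | .neg n => negv (I n)
  | .tt => TV.T O0
  | .ff => TV.F O0

/-- value of a body (conjunction evaluated by `min`; empty conjunction is `T₀`) -/
def evalBody (I : Interp) (b : List Lit) : TV :=
  (b.map (evalLit I)).foldr min (TV.T O0)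

/-- least upper bound in `V` (well-defined by the lub-existence theorem) -/
def lub (S : Set TV) : TV := if h : ∃ v, IsLUB S v then h.choose else TV.Z

/-- the immediate consequence operator -/
def TP (P : Program) (I : Interp) : Interp :=
  fun p => lub {v | ∃ c ∈ P, c.head = p ∧ evalBody I c.body = v}

/-- `I` is an (infinite-valued) model of `P` -/
def isModel (P : Program) (I : Interp) : Prop :=
  ∀ c ∈ P, evalBody I c.body ≤ I c.head

/-- the level set `I ∥ v` -/
def level (I : Interp) (v : TV) : Set ℕ := {p | I p = v}

/-- `I =_α J` -/
def eqA (α : Ord1) (I J : Interp) : Prop :=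
  ∀ β ≤ α, level I (TV.T β) = level J (TV.T β) ∧ level I (TV.F β) = level J (TV.F β)

/-- `I ⊏_α J` -/
def sqltA (α : Ord1) (I J : Interp) : Prop :=
  (∀ β < α, eqA β I J) ∧
    ((level I (TV.T α) ⊂ level J (TV.T α) ∧ level J (TV.F α) ⊆ level I (TV.F α)) ∨
     (level I (TV.T α) ⊆ level J (TV.T α) ∧ level J (TV.F α) ⊂ level I (TV.F α)))

/-- `I ⊑_α J` -/
def sqleA (α : Ord1) (I J : Interp) : Prop := eqA α I J ∨ sqltA α I J

/-- `I ⊏_∞ J` -/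
def sqltInf (I J : Interp) : Prop := ∃ α : Ord1, sqltA α I J

/-- `I ⊑_∞ J` -/
def sqleInf (I J : Interp) : Prop := I = J ∨ sqltInf I J

/-- the sequence `T_P^n(I)` is an `α`-chain -/
def isChainA (P : Program) (α : Ord1) (I : Interp) : Prop :=
  ∀ n : ℕ, sqleA α ((TP P)^[n] I) ((TP P)^[n + 1] I)

/-- the interpretation `T_{P,α}^ω(I)` -/
def TPomega (P : Program) (α : Ord1) (I : Interp) : Interp := fun p =>
  if ordOf (I p) < (α.1 : WithTop Ordinal) then I p
  else if ∃ n : ℕ, (TP P)^[n] I p = TV.T α then TV.T α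
  else if ∀ n : ℕ, (TP P)^[n] I p = TV.F α then TV.F α
  else TV.F α.succ

/-- `⊔_{β<α} M_β` for a family defined below `α` -/
def sqcupI (α : Ord1) (f : ∀ β : Ordinal, β < α.1 → Interp) : Interp := fun p =>
  if h : ∃ β : Ordinal, ∃ hb : β < α.1, ordOf (f β hb p) = (β : WithTop Ordinal)
  then f h.choose h.choose_spec.choose p
  else TV.F α

/-- the approximations `M_α` to the minimum model (junk values for `α ≥ ω₁`) -/
def MA (P : Program) (o : Ordinal) : Interp :=
  Ordinal.limitRecOn o
    (TPomega P O0 botI)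
    (fun o' ih => if h : o' + 1 < ω₁ then TPomega P ⟨o' + 1, h⟩ ih else ih)
    (fun o' _ ih =>
      if h : o' < ω₁ then TPomega P ⟨o', h⟩ (sqcupI ⟨o', h⟩ ih) else botI)

/-- `M_α` for a countable ordinal `α` -/
def Mα (P : Program) (α : Ord1) : Interp := MA P α.1

/-- the defining property of the depth `δ` of a program -/
def isDepth (P : Program) (δ : Ord1) : Prop :=
  (level (Mα P δ) (TV.T δ) = ∅ ∧ level (Mα P δ) (TV.F δ) = ∅) ∧
    ∀ β : Ord1, β < δ →
      (level (Mα P β) (TV.T β) ≠ ∅ ∨ level (Mα P β) (TV.F β) ≠ ∅)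

/-- the depth of a program -/
def depth (P : Program) : Ord1 :=
  if h : ∃ δ : Ord1, isDepth P δ then h.choose else O0

/-- the minimum model `M_P` -/
def MP (P : Program) : Interp := fun p =>
  if ordOf (Mα P (depth P) p) < ((depth P).1 : WithTop Ordinal)
  then Mα P (depth P) p else TV.Z

/-- the set of all infinite-valued models of `P` -/
def models (P : Program) : Set Interp := {I | isModel P I}

/-- `M ♯ α`: the part of `M` consisting of values of order `α` -/
def sharp (I : Interp) (α : Ord1) : Set (ℕ × TV) :=
  {pv | I pv.1 = pv.2 ∧ ordOf pv.2 = (α.1 : WithTop Ordinal)}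

/-- `⨀^α S = ⋀^α S ∪ ⋁^α S` -/
def odot (α : Ord1) (S : Set Interp) : Set (ℕ × TV) :=
  {pv | (∃ p : ℕ, pv = (p, TV.T α) ∧ ∀ M ∈ S, M p = TV.T α) ∨
        (∃ p : ℕ, pv = (p, TV.F α) ∧ ∃ M ∈ S, M p = TV.F α)}

/-- the sets `S_α` of the model intersection construction (junk for `α ≥ ω₁`) -/
def SA (P : Program) (o : Ordinal) : Set Interp :=
  Ordinal.limitRecOn o
    {M ∈ models P | sharp M O0 = odot O0 (models P)}
    (fun o' ih =>
      if h : o' + 1 < ω₁ then {M ∈ ih | sharp M ⟨o' + 1, h⟩ = odot ⟨o' + 1, h⟩ ih} else ih)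
    (fun o' _ ih =>
      if h : o' < ω₁ then
        {M : Interp | M ∈ (⋂ (b : Ordinal) (hb : b < o'), ih b hb) ∧
          sharp M ⟨o', h⟩ = odot ⟨o', h⟩ (⋂ (b : Ordinal) (hb : b < o'), ih b hb)}
      else ∅)


section Aux

lemma TV.T_inj {a b : Ord1} (h : TV.T a = TV.T b) : a = b := by
  simpa [TV.T] using h

lemma TV.F_inj {a b : Ord1} (h : TV.F a = TV.F b) : a = b := by
  simpa [TV.F] using h

lemma TV.T_ne_F (a b : Ord1) : TV.T a ≠ TV.F b := by
  simp [TV.T, TV.F]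

lemma ordOf_T' (a : Ord1) : ordOf (TV.T a) = (a.1 : WithTop Ordinal) := rfl
lemma ordOf_F' (a : Ord1) : ordOf (TV.F a) = (a.1 : WithTop Ordinal) := rfl

lemma ordOf_lt_cases {v : TV} {α : Ord1} (h : ordOf v < (α.1 : WithTop Ordinal)) :
    ∃ β : Ord1, β.1 < α.1 ∧ (v = TV.T β ∨ v = TV.F β) := by
  rcases v with a | (u | a)
  · have h' : ((a.1 : Ordinal) : WithTop Ordinal) < ((α.1 : Ordinal) : WithTop Ordinal) := h
    exact ⟨a, by exact_mod_cast h', Or.inr rfl⟩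
  · exact absurd ((by exact h : (⊤ : WithTop Ordinal) < _)) (by simp)
  · have h' : ((a.1 : Ordinal) : WithTop Ordinal) < ((α.1 : Ordinal) : WithTop Ordinal) := h
    exact ⟨a, by exact_mod_cast h', Or.inl rfl⟩

lemma ordOf_lt_of_eq_T {v : TV} {β α : Ord1} (he : v = TV.T β) (hβ : β.1 < α.1) :
    ordOf v < (α.1 : WithTop Ordinal) := by
  rw [he, ordOf_T']; exact_mod_cast hβ

lemma ordOf_lt_of_eq_F {v : TV} {β α : Ord1} (he : v = TV.F β) (hβ : β.1 < α.1) :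
    ordOf v < (α.1 : WithTop Ordinal) := by
  rw [he, ordOf_F']; exact_mod_cast hβ

lemma sqleA_levels {α : Ord1} {I J : Interp} (h : sqleA α I J) :
    (∀ β : Ord1, β.1 < α.1 →
      level I (TV.T β) = level J (TV.T β) ∧ level I (TV.F β) = level J (TV.F β)) ∧
    level I (TV.T α) ⊆ level J (TV.T α) ∧ level J (TV.F α) ⊆ level I (TV.F α) := by
  rcases h with h | ⟨h1, h2⟩
  · refine ⟨fun β hβ => h β (le_of_lt hβ), ?_, ?_⟩
    · exact (h α le_rfl).1 ▸ Set.Subset.rfl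
    · exact (h α le_rfl).2 ▸ Set.Subset.rfl
  · refine ⟨fun β hβ => h1 β hβ β le_rfl, ?_⟩
    rcases h2 with ⟨hT, hF⟩ | ⟨hT, hF⟩
    · exact ⟨hT.subset, hF⟩
    · exact ⟨hT, hF.subset⟩

lemma sqleA_of_levels {α : Ord1} {K L : Interp}
    (hβ : ∀ β : Ord1, β.1 < α.1 →
      level K (TV.T β) = level L (TV.T β) ∧ level K (TV.F β) = level L (TV.F β))
    (hT : level K (TV.T α) ⊆ level L (TV.T α))
    (hF : level L (TV.F α) ⊆ level K (TV.F α)) :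
    sqleA α K L := by
  by_cases hTe : level K (TV.T α) = level L (TV.T α)
  · by_cases hFe : level K (TV.F α) = level L (TV.F α)
    · left
      intro β hle
      rcases lt_or_eq_of_le hle with hlt | heq
      · exact hβ β hlt
      · subst heq; exact ⟨hTe, hFe⟩
    · right
      refine ⟨fun β hlt γ hγ => hβ γ (lt_of_le_of_lt hγ hlt), Or.inr ⟨hT, ?_⟩⟩
      exact hF.ssubset_of_ne (fun he => hFe he.symm)
  · right
    exact ⟨fun β hlt γ hγ => hβ γ (lt_of_le_of_lt hγ hlt),
      Or.inl ⟨hT.ssubset_of_ne hTe, hF⟩⟩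

lemma chain_level_eq {P : Program} {α : Ord1} {I : Interp} (h : isChainA P α I)
    (n : ℕ) {β : Ord1} (hβ : β.1 < α.1) :
    level ((TP P)^[n] I) (TV.T β) = level I (TV.T β) ∧
    level ((TP P)^[n] I) (TV.F β) = level I (TV.F β) := by
  induction n with
  | zero => simp
  | succ n ih =>
    have hs := (sqleA_levels (h n)).1 β hβ
    exact ⟨hs.1.symm.trans ih.1, hs.2.symm.trans ih.2⟩

lemma TPomega_level_lt {P : Program} {α : Ord1} {I : Interp} {β : Ord1} (hβ : β.1 < α.1) :
    level (TPomega P α I) (TV.T β) = level I (TV.T β) ∧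
    level (TPomega P α I) (TV.F β) = level I (TV.F β) := by
  have hαβ : α ≠ β := fun he => absurd (he ▸ hβ) (lt_irrefl _)
  have hsβ : α.succ ≠ β := by
    intro he
    have hb : β.1 = α.1 + 1 := (congrArg Subtype.val he).symm
    rw [hb] at hβ
    exact absurd hβ (not_lt_of_ge (le_of_lt
      ((Order.lt_succ α.1).trans_eq (Ordinal.add_one_eq_succ α.1).symm)))
  constructor
  · ext p
    simp only [level, mem_setOf_eq, TPomega]
    split_ifs with h1 h2 h3
    · exact Iff.rfl
    · exact ⟨fun he => absurd (TV.T_inj he) hαβ,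
        fun he => absurd (ordOf_lt_of_eq_T he hβ) h1⟩
    · exact ⟨fun he => absurd he.symm (TV.T_ne_F β α),
        fun he => absurd (ordOf_lt_of_eq_T he hβ) h1⟩
    · exact ⟨fun he => absurd he.symm (TV.T_ne_F β α.succ),
        fun he => absurd (ordOf_lt_of_eq_T he hβ) h1⟩
  · ext p
    simp only [level, mem_setOf_eq, TPomega]
    split_ifs with h1 h2 h3
    · exact Iff.rfl
    · exact ⟨fun he => absurd he (TV.T_ne_F α β),
        fun he => absurd (ordOf_lt_of_eq_F he hβ) h1⟩
    · exact ⟨fun he => absurd (TV.F_inj he) hαβ,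
        fun he => absurd (ordOf_lt_of_eq_F he hβ) h1⟩
    · exact ⟨fun he => absurd (TV.F_inj he) hsβ,
        fun he => absurd (ordOf_lt_of_eq_F he hβ) h1⟩

lemma TPomega_level_T {P : Program} {α : Ord1} {I : Interp} (h : isChainA P α I) :
    level (TPomega P α I) (TV.T α) = ⋃ n : ℕ, level ((TP P)^[n] I) (TV.T α) := by
  ext p
  simp only [level, mem_setOf_eq, mem_iUnion, TPomega]
  split_ifs with h1 h2 h3
  · constructor
    · intro he
      rw [he, ordOf_T'] at h1
      exact absurd h1 (lt_irrefl _)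
    · rintro ⟨n, hn⟩
      rcases ordOf_lt_cases h1 with ⟨γ, hγ, hc | hc⟩
      · have hp : p ∈ level ((TP P)^[n] I) (TV.T γ) := (chain_level_eq h n hγ).1 ▸ hc
        have : TV.T γ = TV.T α := (show ((TP P)^[n] I) p = TV.T γ from hp) ▸ hn
        exact absurd (TV.T_inj this ▸ hγ) (lt_irrefl _)
      · have hp : p ∈ level ((TP P)^[n] I) (TV.F γ) := (chain_level_eq h n hγ).2 ▸ hc
        have : TV.F γ = TV.T α := (show ((TP P)^[n] I) p = TV.F γ from hp) ▸ hn
        exact absurd this.symm (TV.T_ne_F _ _)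
  · exact ⟨fun _ => h2, fun _ => rfl⟩
  · exact ⟨fun he => absurd he.symm (TV.T_ne_F _ _),
      fun ⟨n, hn⟩ => absurd ((h3 n).symm.trans hn).symm (TV.T_ne_F _ _)⟩
  · exact ⟨fun he => absurd he.symm (TV.T_ne_F _ _), fun hn => absurd hn h2⟩

lemma TPomega_level_F {P : Program} {α : Ord1} {I : Interp} (h : isChainA P α I) :
    level (TPomega P α I) (TV.F α) = ⋂ n : ℕ, level ((TP P)^[n] I) (TV.F α) := by
  have hsucc : α.succ ≠ α := by
    intro he
    have h1 : α.1 + 1 = α.1 := congrArg Subtype.val he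
    have h2 : α.1 < α.1 + 1 := (Order.lt_succ α.1).trans_eq (Ordinal.add_one_eq_succ α.1).symm
    exact absurd h1 (ne_of_gt h2)
  ext p
  simp only [level, mem_setOf_eq, mem_iInter, TPomega]
  split_ifs with h1 h2 h3
  · constructor
    · intro he
      rw [he, ordOf_F'] at h1
      exact absurd h1 (lt_irrefl _)
    · intro hn
      have h0 : I p = TV.F α := hn 0
      rw [h0, ordOf_F'] at h1
      exact absurd h1 (lt_irrefl _)
  · constructor
    · intro he; exact absurd he (TV.T_ne_F _ _)
    · intro hn
      obtain ⟨n, hTn⟩ := h2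
      exact absurd (hTn.symm.trans (hn n)) (TV.T_ne_F _ _)
  · exact ⟨fun _ => h3, fun _ => rfl⟩
  · exact ⟨fun he => absurd (TV.F_inj he) hsucc, fun hn => absurd hn h3⟩

end Aux

/-- `T_{P,α}^ω(I)` is the `⊑_α`-least upper bound of an `α`-chain `{T_P^n(I)}`. -/
theorem TPomega_lub_of_chain (P : Program) (α : Ord1) (I : Interp)
    (h : isChainA P α I) :
    (∀ n : ℕ, sqleA α ((TP P)^[n] I) (TPomega P α I)) ∧
    (∀ J : Interp, (∀ n : ℕ, sqleA α ((TP P)^[n] I) J) → sqleA α (TPomega P α I) J) := by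
  constructor
  · intro n
    apply sqleA_of_levels
    · intro β hβ
      have hc := chain_level_eq h n hβ
      have hm := TPomega_level_lt (P := P) (I := I) hβ
      exact ⟨hc.1.trans hm.1.symm, hc.2.trans hm.2.symm⟩
    · rw [TPomega_level_T h]
      exact Set.subset_iUnion (fun n => level ((TP P)^[n] I) (TV.T α)) n
    · rw [TPomega_level_F h]
      exact Set.iInter_subset (fun n => level ((TP P)^[n] I) (TV.F α)) n
  · intro J hJ
    apply sqleA_of_levels
    · intro β hβ
      have hm := TPomega_level_lt (P := P) (I := I) hβ
      have hc := chain_level_eq h 0 hβ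
      have hs := (sqleA_levels (hJ 0)).1 β hβ
      exact ⟨hm.1.trans (hc.1.symm.trans hs.1), hm.2.trans (hc.2.symm.trans hs.2)⟩
    · rw [TPomega_level_T h]
      exact Set.iUnion_subset fun n => (sqleA_levels (hJ n)).2.1
    · rw [TPomega_level_F h]
      exact Set.subset_iInter fun n => (sqleA_levels (hJ n)).2.2


end IVS
end
end

section
/- If N is an infinite-valued model of P, then T_P(N) ⊑_∞ N. -/
open Ordinal Set

noncomputable section
attribute [local instance] Classical.propDecidable

namespace IVS

lemma TV.casesOn' (v : TV) : (∃ a, v = TV.F a) ∨ v = TV.Z ∨ ∃ a, v = TV.T a := by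
  rcases h : ofLex v with a | b
  · exact Or.inl ⟨a, by simp [TV.F, ← h]⟩
  · rcases h2 : ofLex b with u | a
    · refine Or.inr (Or.inl ?_)
      have hb : b = toLex (Sum.inl ()) := by rw [← toLex_ofLex b, h2]
      rw [TV.Z, ← toLex_ofLex v, h, hb]
    · refine Or.inr (Or.inr ⟨OrderDual.ofDual a, ?_⟩)
      have hb : b = toLex (Sum.inr a) := by rw [← toLex_ofLex b, h2]
      rw [TV.T, ← toLex_ofLex v, h, hb]
      rfl

lemma TV.F_le_F {a b : Ord1} : TV.F a ≤ TV.F b ↔ a ≤ b := Sum.Lex.inl_le_inl_iff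
lemma TV.T_le_T {a b : Ord1} : TV.T a ≤ TV.T b ↔ b ≤ a := by
  rw [TV.T, TV.T, Sum.Lex.inr_le_inr_iff, Sum.Lex.inr_le_inr_iff]; rfl
lemma TV.F_le_Z {a : Ord1} : TV.F a ≤ TV.Z := Sum.Lex.inl_le_inr _ _
lemma TV.F_le_T {a b : Ord1} : TV.F a ≤ TV.T b := Sum.Lex.inl_le_inr _ _
lemma TV.Z_le_T {a : Ord1} : TV.Z ≤ TV.T a := by
  rw [TV.Z, TV.T]; exact Sum.Lex.inr_le_inr_iff.2 (Sum.Lex.inl_le_inr _ _)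
lemma TV.not_Z_le_F {a : Ord1} : ¬ TV.Z ≤ TV.F a := Sum.Lex.not_inr_le_inl
lemma TV.not_T_le_F {a b : Ord1} : ¬ TV.T a ≤ TV.F b := Sum.Lex.not_inr_le_inl
lemma TV.not_T_le_Z {a : Ord1} : ¬ TV.T a ≤ TV.Z := by
  rw [TV.Z, TV.T, Sum.Lex.inr_le_inr_iff]; exact Sum.Lex.not_inr_le_inl

lemma TV.F_ne_Z {a : Ord1} : TV.F a ≠ TV.Z := by simp [TV.F, TV.Z]
lemma TV.F_ne_T {a b : Ord1} : TV.F a ≠ TV.T b := by simp [TV.F, TV.T]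
lemma TV.Z_ne_T {a : Ord1} : TV.Z ≠ TV.T a := by simp [TV.Z, TV.T]

lemma TV.eq_T_of_T_le {a : Ord1} {v : TV} (h : TV.T a ≤ v) :
    ∃ b, b ≤ a ∧ v = TV.T b := by
  rcases TV.casesOn' v with ⟨b, rfl⟩ | rfl | ⟨b, rfl⟩
  · exact absurd h TV.not_T_le_F
  · exact absurd h TV.not_T_le_Z
  · exact ⟨b, TV.T_le_T.1 h, rfl⟩

lemma TV.eq_F_of_le_F {a : Ord1} {v : TV} (h : v ≤ TV.F a) :
    ∃ b, b ≤ a ∧ v = TV.F b := by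
  rcases TV.casesOn' v with ⟨b, rfl⟩ | rfl | ⟨b, rfl⟩
  · exact ⟨b, TV.F_le_F.1 h, rfl⟩
  · exact absurd h TV.not_Z_le_F
  · exact absurd h TV.not_T_le_F

lemma TV.le_Z {v : TV} (h : ¬ ∃ a, v = TV.T a) : v ≤ TV.Z := by
  rcases TV.casesOn' v with ⟨b, rfl⟩ | rfl | ⟨b, rfl⟩
  · exact TV.F_le_Z
  · exact le_rfl
  · exact absurd ⟨b, rfl⟩ h

lemma TV.le_T {v : TV} (a : Ord1) (h : ∀ b, v = TV.T b → a ≤ b) : v ≤ TV.T a := by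
  rcases TV.casesOn' v with ⟨b, rfl⟩ | rfl | ⟨b, rfl⟩
  · exact TV.F_le_T
  · exact TV.Z_le_T
  · exact TV.T_le_T.2 (h b rfl)

/-- Every subset of `TV` has a least upper bound. -/
lemma TV.exists_isLUB (S : Set TV) : ∃ v, IsLUB S v := by
  by_cases hT : ∃ a : Ord1, TV.T a ∈ S
  · -- take the T with minimal index
    set A : Set Ordinal := {o | ∃ h : o < ω₁, TV.T ⟨o, h⟩ ∈ S} with hA
    have hne : A.Nonempty := by
      obtain ⟨a, ha⟩ := hT
      exact ⟨a.1, a.2, ha⟩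
    obtain ⟨hm1, hm2⟩ := csInf_mem hne
    refine ⟨TV.T ⟨sInf A, hm1⟩, ?_, ?_⟩
    · intro v hv
      refine TV.le_T _ fun b hb => ?_
      subst hb
      exact csInf_le (OrderBot.bddBelow A) ⟨b.2, hv⟩
    · intro u hu
      exact hu hm2
  · by_cases hZ : TV.Z ∈ S
    · refine ⟨TV.Z, ?_, fun u hu => hu hZ⟩
      intro v hv
      exact TV.le_Z fun ⟨a, ha⟩ => hT ⟨a, ha ▸ hv⟩
    · -- S consists only of F values
      have hF : ∀ v ∈ S, ∃ a : Ord1, v = TV.F a := by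
        intro v hv
        rcases TV.casesOn' v with ⟨b, rfl⟩ | rfl | ⟨b, rfl⟩
        · exact ⟨b, rfl⟩
        · exact absurd hv hZ
        · exact absurd ⟨b, hv⟩ hT
      rcases eq_empty_or_nonempty S with rfl | hSne
      · refine ⟨TV.F ⟨0, zero_lt_omega1⟩, fun v hv => hv.elim, fun u _ => ?_⟩
        rcases TV.casesOn' u with ⟨b, rfl⟩ | rfl | ⟨b, rfl⟩
        · exact TV.F_le_F.2 (Subtype.coe_le_coe.1 zero_le)
        · exact TV.F_le_Z
        · exact TV.F_le_T
      set A : Set Ordinal := {o | ∃ h : o < ω₁, TV.F ⟨o, h⟩ ∈ S} with hA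
      have hne : A.Nonempty := by
        obtain ⟨v, hv⟩ := hSne
        obtain ⟨a, rfl⟩ := hF v hv
        exact ⟨a.1, a.2, hv⟩
      have hbdd : BddAbove A := ⟨ω₁, fun o ho => le_of_lt ho.1⟩
      by_cases hs : sSup A < ω₁
      · refine ⟨TV.F ⟨sSup A, hs⟩, ?_, ?_⟩
        · intro v hv
          obtain ⟨a, rfl⟩ := hF v hv
          exact TV.F_le_F.2 (le_csSup hbdd ⟨a.2, hv⟩)
        · intro u hu
          rcases TV.casesOn' u with ⟨b, rfl⟩ | rfl | ⟨b, rfl⟩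
          · refine TV.F_le_F.2 (Subtype.coe_le_coe.1 (csSup_le hne ?_))
            rintro o ⟨ho, hoS⟩
            exact TV.F_le_F.1 (hu hoS)
          · exact TV.F_le_Z
          · exact TV.F_le_T
      · refine ⟨TV.Z, ?_, ?_⟩
        · intro v hv
          obtain ⟨a, rfl⟩ := hF v hv
          exact TV.F_le_Z
        · intro u hu
          rcases TV.casesOn' u with ⟨b, rfl⟩ | rfl | ⟨b, rfl⟩
          · exfalso
            have hlt : b.1 < sSup A := lt_of_lt_of_le b.2 (not_lt.1 hs)
            obtain ⟨o, ⟨ho, hoS⟩, hbo⟩ := (lt_csSup_iff hbdd hne).1 hlt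
            exact absurd (TV.F_le_F.1 (hu hoS)) (not_le.2 hbo)
          · exact le_rfl
          · exact TV.Z_le_T


lemma lub_le_of_upperBound {S : Set TV} {u : TV} (hu : u ∈ upperBounds S) : lub S ≤ u := by
  have hex := TV.exists_isLUB S
  rw [lub, dif_pos hex]
  exact hex.choose_spec.2 hu

lemma sqleInf_of_le {I J : Interp} (hle : ∀ p, I p ≤ J p) : sqleInf I J := by
  by_cases heq : I = J
  · exact Or.inl heq
  right
  set D : Set Ordinal := {o | ∃ h : o < ω₁,
    level I (TV.T ⟨o, h⟩) ≠ level J (TV.T ⟨o, h⟩) ∨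
    level I (TV.F ⟨o, h⟩) ≠ level J (TV.F ⟨o, h⟩)} with hD
  have hne : D.Nonempty := by
    obtain ⟨p, hp0⟩ := Function.ne_iff.1 heq
    have hwit : ∀ (K L : Interp), K p ≠ L p →
        (∃ a : Ord1, K p = TV.T a ∨ K p = TV.F a) →
        ∃ o : Ordinal, ∃ h : o < ω₁,
          level K (TV.T ⟨o, h⟩) ≠ level L (TV.T ⟨o, h⟩) ∨
          level K (TV.F ⟨o, h⟩) ≠ level L (TV.F ⟨o, h⟩) := by
      intro K L hKL ⟨a, ha⟩
      refine ⟨a.1, a.2, ?_⟩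
      rcases ha with ha | ha
      · refine Or.inl fun hset => ?_
        have hp : p ∈ level K (TV.T a) := ha
        rw [hset] at hp
        exact hKL (ha.trans hp.symm)
      · refine Or.inr fun hset => ?_
        have hp : p ∈ level K (TV.F a) := ha
        rw [hset] at hp
        exact hKL (ha.trans hp.symm)
    have hsymm : ∀ (o : Ordinal) (h : o < ω₁),
        (level J (TV.T ⟨o, h⟩) ≠ level I (TV.T ⟨o, h⟩) ∨
         level J (TV.F ⟨o, h⟩) ≠ level I (TV.F ⟨o, h⟩)) → o ∈ D := by
      intro o h hd
      exact ⟨h, hd.imp Ne.symm Ne.symm⟩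
    rcases TV.casesOn' (I p) with ⟨a, ha⟩ | hz | ⟨a, ha⟩
    · obtain ⟨o, h, hd⟩ := hwit I J hp0 ⟨a, Or.inr ha⟩
      exact ⟨o, h, hd⟩
    · rcases TV.casesOn' (J p) with ⟨a, ha⟩ | hz' | ⟨a, ha⟩
      · obtain ⟨o, h, hd⟩ := hwit J I (Ne.symm hp0) ⟨a, Or.inr ha⟩
        exact ⟨o, hsymm o h hd⟩
      · exact absurd (hz.trans hz'.symm) hp0
      · obtain ⟨o, h, hd⟩ := hwit J I (Ne.symm hp0) ⟨a, Or.inl ha⟩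
        exact ⟨o, hsymm o h hd⟩
    · obtain ⟨o, h, hd⟩ := hwit I J hp0 ⟨a, Or.inl ha⟩
      exact ⟨o, h, hd⟩
  obtain ⟨hm1, hm2⟩ := csInf_mem hne
  set α : Ord1 := ⟨sInf D, hm1⟩ with hα
  have hmin : ∀ γ : Ord1, γ.1 < sInf D →
      level I (TV.T γ) = level J (TV.T γ) ∧ level I (TV.F γ) = level J (TV.F γ) := by
    intro γ hγ
    by_contra hc
    rw [not_and_or] at hc
    have hmem : γ.1 ∈ D := ⟨γ.2, hc⟩
    exact absurd (csInf_le (OrderBot.bddBelow D) hmem) (not_le.2 hγ)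
  have subT : level I (TV.T α) ⊆ level J (TV.T α) := by
    intro p hp
    have hIp : I p = TV.T α := hp
    have h1 : TV.T α ≤ J p := hIp ▸ hle p
    obtain ⟨b, hba, hJ⟩ := TV.eq_T_of_T_le h1
    rcases lt_or_eq_of_le hba with hlt | rfl
    · exfalso
      have hpJ : p ∈ level J (TV.T b) := hJ
      rw [← (hmin b (Subtype.coe_lt_coe.2 hlt)).1] at hpJ
      have hIb : I p = TV.T b := hpJ
      exact absurd (TV.T_inj (hIb.symm.trans hIp)) (ne_of_lt hlt)
    · exact hJ
  have subF : level J (TV.F α) ⊆ level I (TV.F α) := by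
    intro p hp
    have hJp : J p = TV.F α := hp
    have h1 : I p ≤ TV.F α := hJp ▸ hle p
    obtain ⟨b, hba, hI⟩ := TV.eq_F_of_le_F h1
    rcases lt_or_eq_of_le hba with hlt | rfl
    · exfalso
      have hpI : p ∈ level I (TV.F b) := hI
      rw [(hmin b (Subtype.coe_lt_coe.2 hlt)).2] at hpI
      have hJb : J p = TV.F b := hpI
      exact absurd (TV.F_inj (hJb.symm.trans hJp)) (ne_of_lt hlt)
    · exact hI
  refine ⟨α, fun β hβ γ hγ => ?_, ?_⟩
  · exact hmin γ (lt_of_le_of_lt (Subtype.coe_le_coe.2 hγ) hβ)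
  · rcases hm2 with hT | hF
    · exact Or.inl ⟨HasSubset.Subset.ssubset_of_ne subT hT, subF⟩
    · exact Or.inr ⟨subT, HasSubset.Subset.ssubset_of_ne subF (Ne.symm hF)⟩

/-- If `N` is a model of `P` then `T_P(N) ⊑_∞ N`. -/
theorem TP_sqleInf_of_model (P : Program) (N : Interp) (h : isModel P N) :
    sqleInf (TP P N) N := by
  apply sqleInf_of_le
  intro p
  apply lub_le_of_upperBound
  rintro v ⟨c, hc, hh, rfl⟩
  exact hh ▸ h c hc

end IVS
end
end
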